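/- Let n ≥ 2 and let f : ℝ≥0 → ℝ ∪ {−∞} be a strictly increasing function that is continuous on ℝ>0. Then the following are equivalent: (a) for every positive-admitting two-value instance with n agents, every allocation chosen by the additive welfarist rule with f is EF1; (b) there exist constants α ∈ ℝ>0 and β ∈ ℝ such that f(x) = α·log x + β for all x ∈ ℝ≥0 (with f(0) = −∞). -/

import Mathlib

open scoped BigOperators

noncomputable section

namespace FairDiv

/-- The bundle of goods received by agent `i` under the assignment `A` of goods to agents. -/
def bundle {n m : ℕ} (A : Fin m → Fin n) (i : Fin n) : Finset (Fin m) :=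
  Finset.univ.filter fun g => A g = i

/-- Additive utility of agent `i` for a set `S` of goods. -/
def util {n m : ℕ} (u : Fin n → Fin m → ℝ) (i : Fin n) (S : Finset (Fin m)) : ℝ :=
  ∑ g ∈ S, u i g

/-- Envy-freeness up to one good. -/
def EF1 {n m : ℕ} (u : Fin n → Fin m → ℝ) (A : Fin m → Fin n) : Prop :=
  ∀ i j : Fin n, bundle A j ≠ ∅ →
    ∃ g ∈ bundle A j, util u i ((bundle A j).erase g) ≤ util u i (bundle A i)

/-- Welfare of an allocation under the additive welfarist rule with function `f`. -/
def welfare {n m : ℕ} (f : ℝ → EReal) (u : Fin n → Fin m → ℝ) (A : Fin m → Fin n) : EReal :=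
  ∑ i : Fin n, f (util u i (bundle A i))

/-- An allocation is chosen by the additive welfarist rule with `f` if it maximizes welfare. -/
def Chosen {n m : ℕ} (f : ℝ → EReal) (u : Fin n → Fin m → ℝ) (A : Fin m → Fin n) : Prop :=
  ∀ B : Fin m → Fin n, welfare f u B ≤ welfare f u A

/-- An instance is positive-admitting if some allocation gives everyone positive utility. -/
def PositiveAdmitting {n m : ℕ} (u : Fin n → Fin m → ℝ) : Prop :=
  ∃ B : Fin m → Fin n, ∀ i : Fin n, 0 < util u i (bundle B i)

def IdenticalGood {n m : ℕ} (u : Fin n → Fin m → ℝ) : Prop :=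
  ∀ i : Fin n, ∃ a : ℝ, 0 < a ∧ ∀ g : Fin m, u i g = a

def TwoValue {n m : ℕ} (u : Fin n → Fin m → ℝ) : Prop :=
  ∃ a₁ a₂ : ℝ, a₁ ≠ a₂ ∧ 0 ≤ a₁ ∧ 0 ≤ a₂ ∧ ∀ i g, u i g = a₁ ∨ u i g = a₂

def Normalized {n m : ℕ} (u : Fin n → Fin m → ℝ) : Prop :=
  ∀ i j : Fin n, util u i Finset.univ = util u j Finset.univ

def IntegerValued {n m : ℕ} (u : Fin n → Fin m → ℝ) : Prop :=
  ∀ i g, ∃ z : ℕ, u i g = (z : ℝ)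

def Binary {n m : ℕ} (u : Fin n → Fin m → ℝ) : Prop :=
  ∀ i g, u i g = 0 ∨ u i g = 1

/-- `Δ_{f,k}(x) = f((k+1)x) − f(kx)`, valued in `EReal` (it is `+∞` iff `f(kx) = −∞`). -/
def Delta (f : ℝ → EReal) (k : ℕ) (x : ℝ) : EReal :=
  f (((k : ℝ) + 1) * x) - f ((k : ℝ) * x)

/-- Condition 1: `Δ_{f,k}(b) > Δ_{f,k+1}(a)` for all `k ∈ ℤ≥0` and `a, b ∈ ℝ>0`. -/
def Cond1 (f : ℝ → EReal) : Prop :=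
  ∀ k : ℕ, ∀ a b : ℝ, 0 < a → 0 < b → Delta f (k + 1) a < Delta f k b

/-- Condition 1a: `Δ_{f,k}` is constant on `ℝ>0` for every `k ∈ ℤ>0`. -/
def Cond1a (f : ℝ → EReal) : Prop :=
  ∀ k : ℕ, 0 < k → ∀ x y : ℝ, 0 < x → 0 < y → Delta f k x = Delta f k y

/-- Condition 2. -/
def Cond2 (f : ℝ → EReal) : Prop :=
  ∀ a b c d : ℝ, 0 ≤ a → 0 ≤ b → 0 ≤ c → 0 ≤ d →
    min a b ≤ min c d → a * b < c * d → f a + f b < f c + f d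

/-- Condition 3: `Δ_{f,k}(b) > Δ_{f,k+1}(a)` for all `k ∈ ℤ≥0` and `a, b ∈ ℤ>0`. -/
def Cond3 (f : ℝ → EReal) : Prop :=
  ∀ k : ℕ, ∀ a b : ℕ, 0 < a → 0 < b → Delta f (k + 1) (a : ℝ) < Delta f k (b : ℝ)

/-- Condition 3a. -/
def Cond3a (f : ℝ → EReal) : Prop :=
  ∀ k l : ℕ, l < k → ∀ a b : ℕ, 0 < a → 0 < b → Delta f k (a : ℝ) < Delta f l (b : ℝ)

/-- Condition 3b: `Δ_{f,k}(1) > Δ_{f,k+1}(a) > Δ_{f,k+2}(1)` for `k ∈ ℤ≥0`, `a ∈ ℤ>0`. -/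
def Cond3b (f : ℝ → EReal) : Prop :=
  ∀ k : ℕ, ∀ a : ℕ, 0 < a →
    Delta f (k + 1) (a : ℝ) < Delta f k 1 ∧ Delta f (k + 2) 1 < Delta f (k + 1) (a : ℝ)

/-- Condition 4: `Δ_{f,k}(1) > Δ_{f,k+1}(1)` for all `k ∈ ℤ≥0`. -/
def Cond4 (f : ℝ → EReal) : Prop :=
  ∀ k : ℕ, Delta f (k + 1) 1 < Delta f k 1

/-- Condition 5. -/
def Cond5 (f : ℝ → EReal) : Prop :=
  ∀ a b k l r : ℕ, 0 < a → 0 < b → b ≤ a → l * b + r * a < (k + 1) * b →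
    Delta f (k + 1) (a : ℝ) <
        f (((l : ℝ) + 1) * (b : ℝ) + (r : ℝ) * (a : ℝ)) - f ((l : ℝ) * (b : ℝ) + (r : ℝ) * (a : ℝ))
      ∧ Delta f (k + 2) 1 < Delta f (k + 1) (a : ℝ)

/-- Condition 6a: `f((k+1)b−1) − f(kb−1) > Δ_{f,k}(a)` for all `k, a, b ∈ ℤ>0`. -/
def Cond6a (f : ℝ → EReal) : Prop :=
  ∀ k a b : ℕ, 0 < k → 0 < a → 0 < b →
    Delta f k (a : ℝ) < f (((k : ℝ) + 1) * (b : ℝ) - 1) - f ((k : ℝ) * (b : ℝ) - 1)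

/-- Condition 6b: `f(y+b) − f(y) > f(x+a) − f(x)` whenever `x/a ≥ (y+1)/b`. -/
def Cond6b (f : ℝ → EReal) : Prop :=
  ∀ a b : ℕ, ∀ x y : ℕ, 0 < a → 0 < b → ((y : ℝ) + 1) / (b : ℝ) ≤ (x : ℝ) / (a : ℝ) →
    f ((x : ℝ) + (a : ℝ)) - f (x : ℝ) < f ((y : ℝ) + (b : ℝ)) - f (y : ℝ)

/-- Modified logarithmic function `λ_c(x) = log (x + c)`, with `log 0 = −∞`. -/
def lam (c : ℝ) (x : ℝ) : EReal :=
  if x + c = 0 then ⊥ else ((Real.log (x + c) : ℝ) : EReal)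

/-- The `p`-mean function `φ_p`, with `φ_p(0) = −∞` for `p ≤ 0`. -/
def phi (p : ℝ) (x : ℝ) : EReal :=
  if 0 < p then ((x ^ p : ℝ) : EReal)
  else if x = 0 then ⊥
  else if p = 0 then ((Real.log x : ℝ) : EReal)
  else ((-(x ^ p) : ℝ) : EReal)

/-- Modified harmonic number `h_c` on nonnegative integers. -/
def hmod (c : ℝ) (x : ℕ) : EReal :=
  if c = -1 then
    (if x = 0 then (⊥ : EReal)
     else (((∑ t ∈ Finset.range (x - 1), (1 : ℝ) / ((t : ℝ) + 1)) : ℝ) : EReal))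
  else (((∑ t ∈ Finset.range x, (1 : ℝ) / ((t : ℝ) + 1 + c)) : ℝ) : EReal)

/-- Condition 3b for a function defined on nonnegative integers. -/
def Cond3bNat (f : ℕ → EReal) : Prop :=
  ∀ k : ℕ, ∀ a : ℕ, 0 < a →
    f ((k + 2) * a) - f ((k + 1) * a) < f (k + 1) - f k
    ∧ f (k + 3) - f (k + 2) < f ((k + 2) * a) - f ((k + 1) * a)

open Finset

lemma coe_sum {ι : Type*} (s : Finset ι) (g : ι → ℝ) :
    ((∑ i ∈ s, g i : ℝ) : EReal) = ∑ i ∈ s, ((g i : ℝ) : EReal) :=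
  map_sum (⟨⟨Real.toEReal, EReal.coe_zero⟩, EReal.coe_add⟩ : ℝ →+ EReal) g s

lemma sum_ne_top {ι : Type*} (s : Finset ι) (g : ι → EReal)
    (htop : ∀ i ∈ s, g i ≠ ⊤) : ∑ i ∈ s, g i ≠ ⊤ := by
  classical
  induction s using Finset.cons_induction with
  | empty => simp
  | cons a s ha ih =>
    rw [Finset.sum_cons]
    exact (EReal.add_lt_top (htop a (Finset.mem_cons_self a s))
      (ih fun i hi => htop i (Finset.mem_cons.2 (Or.inr hi)))).ne

lemma sum_eq_bot {ι : Type*} (s : Finset ι) (g : ι → EReal)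
    {i₀ : ι} (hi₀ : i₀ ∈ s) (hbot : g i₀ = ⊥) [DecidableEq ι] :
    ∑ i ∈ s, g i = ⊥ := by
  rw [← Finset.add_sum_erase s g hi₀, hbot, EReal.bot_add]

lemma mem_bundle {n m : ℕ} {A : Fin m → Fin n} {i : Fin n} {g : Fin m} :
    g ∈ bundle A i ↔ A g = i := by simp [bundle]

lemma sum_card_bundle {n m : ℕ} (A : Fin m → Fin n) :
    ∑ i : Fin n, (bundle A i).card = m := by
  have h := Finset.card_eq_sum_card_fiberwise
    (f := A) (s := Finset.univ) (t := Finset.univ) (fun x _ => Finset.mem_univ _)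
  rw [Finset.card_fin] at h
  exact h.symm

lemma util_nonneg {n m : ℕ} {u : Fin n → Fin m → ℝ} {i : Fin n} {S : Finset (Fin m)}
    (hu : ∀ g, 0 ≤ u i g) : 0 ≤ util u i S :=
  Finset.sum_nonneg fun g _ => hu g

lemma util_const {n m : ℕ} {u : Fin n → Fin m → ℝ} {i : Fin n} {a : ℝ}
    (h : ∀ g, u i g = a) (S : Finset (Fin m)) : util u i S = S.card * a := by
  simp [util, h, Finset.sum_const, nsmul_eq_mul]

lemma util_erase {n m : ℕ} (u : Fin n → Fin m → ℝ) (i : Fin n) {S : Finset (Fin m)}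
    {g : Fin m} (hg : g ∈ S) : util u i (S.erase g) = util u i S - u i g :=
  Finset.sum_erase_eq_sub hg

lemma util_insert {n m : ℕ} (u : Fin n → Fin m → ℝ) (i : Fin n) {S : Finset (Fin m)}
    {g : Fin m} (hg : g ∉ S) : util u i (insert g S) = u i g + util u i S :=
  Finset.sum_insert hg

lemma bundle_update_same {n m : ℕ} (A : Fin m → Fin n) (g₀ : Fin m) (i : Fin n) :
    bundle (Function.update A g₀ i) i = insert g₀ (bundle A i) := by
  ext g
  by_cases hg : g = g₀ <;> simp [bundle, Function.update, hg]

lemma bundle_update_ne {n m : ℕ} (A : Fin m → Fin n) (g₀ : Fin m) {i j : Fin n}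
    (hij : j ≠ i) : bundle (Function.update A g₀ i) j = (bundle A j).erase g₀ := by
  ext g
  by_cases hg : g = g₀ <;> simp [bundle, Function.update, hg, hij.symm]

lemma exists_chosen {n m : ℕ} (hn : 0 < n) (f : ℝ → EReal) (u : Fin n → Fin m → ℝ) :
    ∃ A : Fin m → Fin n, Chosen f u A := by
  have : Nonempty (Fin n) := ⟨⟨0, hn⟩⟩
  obtain ⟨A, hA⟩ := Finite.exists_max (fun A : Fin m → Fin n => welfare f u A)
  exact ⟨A, hA⟩
lemma sum_ne_bot {ι : Type*} (s : Finset ι) (g : ι → EReal)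
    (hbot : ∀ i ∈ s, g i ≠ ⊥) : ∑ i ∈ s, g i ≠ ⊥ := by
  classical
  induction s using Finset.cons_induction with
  | empty => simp
  | cons a s ha ih =>
    rw [Finset.sum_cons, Ne, EReal.add_eq_bot_iff]
    push_neg
    exact ⟨hbot a (Finset.mem_cons_self a s),
      ih fun i hi => hbot i (Finset.mem_cons.2 (Or.inr hi))⟩

lemma chosen_pos {n m : ℕ} (f : ℝ → EReal)
    (hne_top : ∀ x : ℝ, 0 ≤ x → f x ≠ ⊤) (hf0 : f 0 = ⊥)
    (hne_bot : ∀ x : ℝ, 0 < x → f x ≠ ⊥)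
    (u : Fin n → Fin m → ℝ) (hu : ∀ i g, 0 ≤ u i g)
    (hpa : PositiveAdmitting u) (A : Fin m → Fin n) (hA : Chosen f u A) :
    ∀ i, 0 < util u i (bundle A i) := by
  classical
  obtain ⟨B, hB⟩ := hpa
  intro i
  rcases lt_or_eq_of_le (util_nonneg (fun g => hu i g) : (0:ℝ) ≤ util u i (bundle A i))
    with h | h
  · exact h
  · exfalso
    have hAbot : welfare f u A = ⊥ := by
      refine sum_eq_bot Finset.univ _ (Finset.mem_univ i) ?_
      rw [← h, hf0]
    have hBbot : welfare f u B ≠ ⊥ :=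
      sum_ne_bot _ _ fun l _ => hne_bot _ (hB l)
    have := hA B
    rw [hAbot, le_bot_iff] at this
    exact hBbot this

lemma chosen_EF1_of_log {n m : ℕ} (f : ℝ → EReal) (α β : ℝ) (hα : 0 < α)
    (hf0 : f 0 = ⊥) (hf : ∀ x : ℝ, 0 < x → f x = ((α * Real.log x + β : ℝ) : EReal))
    (u : Fin n → Fin m → ℝ) (hu : ∀ i g, 0 ≤ u i g)
    (hpa : PositiveAdmitting u) (A : Fin m → Fin n) (hA : Chosen f u A) : EF1 u A := by
  classical
  have hne_top : ∀ x : ℝ, 0 ≤ x → f x ≠ ⊤ := by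
    intro x hx
    rcases lt_or_eq_of_le hx with h | h
    · rw [hf x h]; exact EReal.coe_ne_top _
    · rw [← h, hf0]; exact bot_ne_top
  have hne_bot : ∀ x : ℝ, 0 < x → f x ≠ ⊥ := by
    intro x hx; rw [hf x hx]; exact EReal.coe_ne_bot _
  have hpos := chosen_pos f hne_top hf0 hne_bot u hu hpa A hA
  intro i j hjne
  have hjne' : (bundle A j).Nonempty := Finset.nonempty_iff_ne_empty.2 hjne
  by_cases hij : i = j
  · subst hij
    obtain ⟨g, hg⟩ := hjne'
    refine ⟨g, hg, ?_⟩
    rw [util_erase u i hg]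
    have := hu i g
    linarith
  by_contra hno
  push_neg at hno
  have hlt : ∀ g ∈ bundle A j, util u i (bundle A i) < util u i ((bundle A j).erase g) :=
    hno
  -- find g* minimizing u j g / u i g among goods with u i g > 0
  set T := (bundle A j).filter (fun g => 0 < u i g) with hT
  have hTne : T.Nonempty := by
    by_contra hTe
    rw [Finset.not_nonempty_iff_eq_empty] at hTe
    have hz : ∀ g ∈ bundle A j, u i g = 0 := by
      intro g hg
      by_contra hgz
      have hgpos : 0 < u i g := lt_of_le_of_ne (hu i g) (Ne.symm hgz)
      have : g ∈ T := Finset.mem_filter.2 ⟨hg, hgpos⟩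
      rw [hTe] at this
      exact absurd this (Finset.notMem_empty g)
    obtain ⟨g, hg⟩ := hjne'
    have h1 := hlt g hg
    have h2 : util u i ((bundle A j).erase g) = 0 := by
      apply Finset.sum_eq_zero
      intro g' hg'
      exact hz g' (Finset.mem_of_mem_erase hg')
    have h3 : (0:ℝ) ≤ util u i (bundle A i) := util_nonneg fun g => hu i g
    rw [h2] at h1
    linarith
  obtain ⟨gs, hgsT, hmin⟩ := Finset.exists_min_image T (fun g => u j g / u i g) hTne
  have hgsj : gs ∈ bundle A j := (Finset.mem_filter.1 hgsT).1
  have hp : 0 < u i gs := (Finset.mem_filter.1 hgsT).2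
  set x := util u i (bundle A i) with hxdef
  set y := util u j (bundle A j) with hydef
  set z := util u i (bundle A j) with hzdef
  set p := u i gs
  set q := u j gs
  have hq0 : 0 ≤ q := hu j gs
  have hx : 0 < x := hpos i
  have hy : 0 < y := hpos j
  have hviol : x + p < z := by
    have := hlt gs hgsj
    rw [util_erase u i hgsj] at this
    linarith
  have key : q * z ≤ p * y := by
    rw [hzdef, hydef, util, util, Finset.mul_sum, Finset.mul_sum]
    apply Finset.sum_le_sum
    intro g hg
    by_cases hgi : 0 < u i g
    · have hm := hmin g (Finset.mem_filter.2 ⟨hg, hgi⟩)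
      rw [div_le_div_iff₀ hp hgi] at hm
      nlinarith
    · have : u i g = 0 := le_antisymm (not_lt.1 hgi) (hu i g)
      rw [this, mul_zero]
      exact mul_nonneg hp.le (hu j g)
  have hprod : x * y < (x + p) * (y - q) := by
    rcases eq_or_lt_of_le hq0 with h | h
    · rw [← h]; nlinarith
    · nlinarith
  have hyq : 0 < y - q := by
    by_contra hc
    push_neg at hc
    nlinarith
  -- the improved allocation
  set B := Function.update A gs i with hBdef
  have hgsnotAi : gs ∉ bundle A i := by
    rw [mem_bundle]
    rw [mem_bundle] at hgsj
    rw [hgsj]; exact Ne.symm hij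
  have hBi : bundle B i = insert gs (bundle A i) := bundle_update_same A gs i
  have hBj : bundle B j = (bundle A j).erase gs :=
    bundle_update_ne A gs (fun h => hij h.symm)
  have hBl : ∀ l : Fin n, l ≠ i → l ≠ j → bundle B l = bundle A l := by
    intro l hli hlj
    rw [bundle_update_ne A gs hli]
    apply Finset.erase_eq_of_notMem
    rw [mem_bundle]
    rw [mem_bundle] at hgsj
    rw [hgsj]
    exact Ne.symm hlj
  have hui : util u i (bundle B i) = p + x := by rw [hBi, util_insert u i hgsnotAi]
  have huj : util u j (bundle B j) = y - q := by rw [hBj, util_erase u j hgsj]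
  have hBpos : ∀ l, 0 < util u l (bundle B l) := by
    intro l
    by_cases hli : l = i
    · subst hli; rw [hui]; linarith
    by_cases hlj : l = j
    · subst hlj; rw [huj]; exact hyq
    · rw [hBl l hli hlj]; exact hpos l
  -- welfare comparison
  have hwB : welfare f u B
      = ((∑ l, (α * Real.log (util u l (bundle B l)) + β) : ℝ) : EReal) := by
    rw [coe_sum]
    exact Finset.sum_congr rfl fun l _ => hf _ (hBpos l)
  have hwA : welfare f u A
      = ((∑ l, (α * Real.log (util u l (bundle A l)) + β) : ℝ) : EReal) := by
    rw [coe_sum]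
    exact Finset.sum_congr rfl fun l _ => hf _ (hpos l)
  have hle := hA B
  rw [hwA, hwB, EReal.coe_le_coe_iff] at hle
  -- contradiction: the B-sum is strictly larger
  have hsplit : ∀ w : Fin n → ℝ, ∑ l, w l
      = w i + (w j + ∑ l ∈ (Finset.univ.erase i).erase j, w l) := by
    intro w
    rw [Finset.add_sum_erase _ w (Finset.mem_erase.2 ⟨fun h => hij h.symm, Finset.mem_univ j⟩),
      Finset.add_sum_erase _ w (Finset.mem_univ i)]
  rw [hsplit, hsplit] at hle
  have hrest : ∑ l ∈ (Finset.univ.erase i).erase j,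
        (α * Real.log (util u l (bundle B l)) + β)
      = ∑ l ∈ (Finset.univ.erase i).erase j,
        (α * Real.log (util u l (bundle A l)) + β) := by
    apply Finset.sum_congr rfl
    intro l hl
    have hl' := Finset.mem_erase.1 hl
    have hl'' := Finset.mem_erase.1 hl'.2
    rw [hBl l hl''.1 hl'.1]
  rw [hrest, hui, huj] at hle
  have hlog : Real.log x + Real.log y < Real.log (p + x) + Real.log (y - q) := by
    rw [← Real.log_mul hx.ne' hy.ne', ← Real.log_mul (by linarith) hyq.ne']
    apply Real.log_lt_log (by positivity)
    nlinarith
  nlinarith [hle]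
lemma step_lemma {n : ℕ} (hn : 2 ≤ n) (f : ℝ → EReal)
    (hprop : ∀ m : ℕ, ∀ u : Fin n → Fin m → ℝ, (∀ i g, 0 ≤ u i g) →
        TwoValue u → PositiveAdmitting u →
        ∀ A : Fin m → Fin n, Chosen f u A → EF1 u A)
    (fr : ℝ → ℝ) (hfr : ∀ x : ℝ, 0 < x → f x = ((fr x : ℝ) : EReal))
    (k : ℕ) (hk : 1 ≤ k) (a b : ℝ) (ha : 0 < a) (hb : 0 < b) (hab : a ≠ b) :
    fr (((k:ℝ) + 2) * a) - fr (((k:ℝ) + 1) * a) < fr (((k:ℝ) + 1) * b) - fr ((k:ℝ) * b) := by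
  classical
  set m := n * (k + 1) with hm
  have hn0 : 0 < n := by omega
  set i0 : Fin n := ⟨0, by omega⟩ with hi0
  set i1 : Fin n := ⟨1, by omega⟩ with hi1
  have hi01 : i0 ≠ i1 := by
    intro h
    have := congrArg Fin.val h
    simp [hi0, hi1] at this
  set v : Fin n → ℝ := fun i => if i = i0 then a else b with hv
  have hvpos : ∀ i, 0 < v i := by
    intro i; by_cases h : i = i0 <;> simp [hv, h, ha, hb]
  set u : Fin n → Fin m → ℝ := fun i _ => v i with hu
  have hunn : ∀ i g, 0 ≤ u i g := fun i g => (hvpos i).le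
  have htv : TwoValue u := by
    refine ⟨a, b, hab, ha.le, hb.le, fun i g => ?_⟩
    by_cases h : i = i0 <;> simp [hu, hv, h]
  have hutil : ∀ (i : Fin n) (S : Finset (Fin m)), util u i S = (S.card : ℝ) * v i :=
    fun i S => util_const (fun g => rfl) S
  have hpa : PositiveAdmitting u := by
    refine ⟨fun g => ⟨g % n, Nat.mod_lt _ hn0⟩, fun i => ?_⟩
    rw [hutil]
    have : (⟨i.val, lt_of_lt_of_le i.isLt (Nat.le_mul_of_pos_right n (by omega))⟩ : Fin m)
        ∈ bundle (fun g : Fin m => (⟨g % n, Nat.mod_lt _ hn0⟩ : Fin n)) i := by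
      rw [mem_bundle]
      exact Fin.ext (by simpa using Nat.mod_eq_of_lt i.isLt)
    have hcard : 0 < (bundle (fun g : Fin m => (⟨g % n, Nat.mod_lt _ hn0⟩ : Fin n)) i).card :=
      Finset.card_pos.2 ⟨_, this⟩
    have : (0:ℝ) < (bundle (fun g : Fin m => (⟨g % n, Nat.mod_lt _ hn0⟩ : Fin n)) i).card := by
      exact_mod_cast hcard
    exact mul_pos this (hvpos i)
  obtain ⟨A, hA⟩ := exists_chosen hn0 f u
  have hEF1 := hprop m u hunn htv hpa A hA
  -- EF1 implies the bundle sizes are balanced; with m = n(k+1) all sizes are k+1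
  have hsizes : ∀ i j : Fin n, (bundle A j).Nonempty →
      (bundle A j).card ≤ (bundle A i).card + 1 := by
    intro i j hne
    obtain ⟨g, hg, hle⟩ := hEF1 i j (Finset.nonempty_iff_ne_empty.1 hne)
    rw [util_erase u i hg, hutil, hutil] at hle
    have hug : u i g = v i := rfl
    rw [hug] at hle
    have : ((bundle A j).card : ℝ) ≤ ((bundle A i).card : ℝ) + 1 := by
      have hvi := hvpos i
      nlinarith
    exact_mod_cast this
  have hsum : ∑ i : Fin n, (bundle A i).card = n * (k + 1) := sum_card_bundle A
  have hub : ∀ i : Fin n, (bundle A i).card ≤ k + 1 := by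
    by_contra hc
    push_neg at hc
    obtain ⟨j, hj⟩ := hc
    have hjne : (bundle A j).Nonempty := Finset.card_pos.1 (by omega)
    have : ∑ i : Fin n, (bundle A i).card
        ≥ (bundle A j).card + ∑ _i ∈ Finset.univ.erase j, (k + 1) := by
      rw [← Finset.add_sum_erase _ _ (Finset.mem_univ j)]
      gcongr with i hi
      have := hsizes i j hjne
      omega
    rw [hsum, Finset.sum_const, Finset.card_erase_of_mem (Finset.mem_univ j),
      Finset.card_fin] at this
    have hnk : (n - 1) * (k + 1) = n * (k + 1) - (k + 1) := Nat.sub_one_mul _ _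
    simp only [smul_eq_mul] at this
    omega
  have hcards : ∀ i : Fin n, (bundle A i).card = k + 1 := by
    by_contra hc
    push_neg at hc
    obtain ⟨j, hj⟩ := hc
    have hjlt : (bundle A j).card < k + 1 := lt_of_le_of_ne (hub j) hj
    have : ∑ i : Fin n, (bundle A i).card < ∑ _i : Fin n, (k + 1) :=
      Finset.sum_lt_sum (fun i _ => hub i) ⟨j, Finset.mem_univ j, hjlt⟩
    rw [hsum, Finset.sum_const, Finset.card_fin, smul_eq_mul] at this
    omega
  -- construct the unbalanced allocation B by moving one good from agent i1 to agent i0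
  have hne1 : (bundle A i1).Nonempty := Finset.card_pos.1 (by rw [hcards]; omega)
  obtain ⟨g₀, hg₀⟩ := hne1
  set B := Function.update A g₀ i0 with hB
  have hg₀0 : g₀ ∉ bundle A i0 := by
    rw [mem_bundle]; rw [mem_bundle] at hg₀; rw [hg₀]; exact Ne.symm hi01
  have hB0 : bundle B i0 = insert g₀ (bundle A i0) := bundle_update_same A g₀ i0
  have hB1 : bundle B i1 = (bundle A i1).erase g₀ := bundle_update_ne A g₀ hi01.symm
  have hBl : ∀ l : Fin n, l ≠ i0 → l ≠ i1 → bundle B l = bundle A l := by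
    intro l hl0 hl1
    rw [bundle_update_ne A g₀ hl0]
    apply Finset.erase_eq_of_notMem
    rw [mem_bundle]; rw [mem_bundle] at hg₀; rw [hg₀]; exact Ne.symm hl1
  have hcB0 : (bundle B i0).card = k + 2 := by
    rw [hB0, Finset.card_insert_of_notMem hg₀0, hcards]
  have hcB1 : (bundle B i1).card = k := by
    rw [hB1, Finset.card_erase_of_mem hg₀, hcards]
    omega
  -- B is not EF1
  have hBnotEF1 : ¬ EF1 u B := by
    intro hEF
    obtain ⟨g, hg, hle⟩ := hEF i1 i0 (by
      intro h
      have : (bundle B i0).card = 0 := by rw [h]; rfl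
      omega)
    rw [util_erase u i1 hg, hutil, hutil, hcB0, hcB1] at hle
    have hug : u i1 g = v i1 := rfl
    rw [hug] at hle
    have hvi1 : v i1 = b := by simp [hv, hi01.symm]
    rw [hvi1] at hle
    push_cast at hle
    nlinarith
  -- welfare comparison must be strict
  have hwlt : welfare f u B < welfare f u A := by
    rcases lt_or_eq_of_le (hA B) with h | h
    · exact h
    · exfalso
      apply hBnotEF1
      apply hprop m u hunn htv hpa B
      intro C
      rw [h]
      exact hA C
  -- compute both welfares
  have hv0 : v i0 = a := by simp [hv]
  have hv1 : v i1 = b := by simp [hv, hi01.symm]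
  have hutilpos : ∀ (C : Fin m → Fin n) l, 0 < (bundle C l).card →
      0 < util u l (bundle C l) := by
    intro C l hc
    rw [hutil]
    have : (0:ℝ) < ((bundle C l).card : ℝ) := by exact_mod_cast hc
    exact mul_pos this (hvpos l)
  have hsplit : ∀ C : Fin m → Fin n, welfare f u C
      = f (util u i0 (bundle C i0)) + (f (util u i1 (bundle C i1))
        + ∑ l ∈ (Finset.univ.erase i0).erase i1, f (util u l (bundle C l))) := by
    intro C
    rw [welfare,
      ← Finset.add_sum_erase _ _ (Finset.mem_univ i0),
      ← Finset.add_sum_erase _ _ (Finset.mem_erase.2 ⟨hi01.symm, Finset.mem_univ i1⟩)]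
  have hrest : ∑ l ∈ (Finset.univ.erase i0).erase i1, f (util u l (bundle B l))
      = ∑ l ∈ (Finset.univ.erase i0).erase i1, f (util u l (bundle A l)) := by
    apply Finset.sum_congr rfl
    intro l hl
    have hl' := Finset.mem_erase.1 hl
    have hl'' := Finset.mem_erase.1 hl'.2
    rw [hBl l hl''.1 hl'.1]
  have hrestval : ∑ l ∈ (Finset.univ.erase i0).erase i1, f (util u l (bundle A l))
      = ((∑ l ∈ (Finset.univ.erase i0).erase i1, fr (util u l (bundle A l)) : ℝ) : EReal) := by
    rw [coe_sum]
    apply Finset.sum_congr rfl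
    intro l hl
    rw [hfr]
    apply hutilpos
    rw [hcards]
    omega
  have hA0 : util u i0 (bundle A i0) = ((k:ℝ) + 1) * a := by
    rw [hutil, hcards, hv0]; push_cast; ring
  have hA1 : util u i1 (bundle A i1) = ((k:ℝ) + 1) * b := by
    rw [hutil, hcards, hv1]; push_cast; ring
  have hB0u : util u i0 (bundle B i0) = ((k:ℝ) + 2) * a := by
    rw [hutil, hcB0, hv0]; push_cast; ring
  have hB1u : util u i1 (bundle B i1) = (k:ℝ) * b := by
    rw [hutil, hcB1, hv1]
  rw [hsplit A, hsplit B, hrest, hrestval, hA0, hA1, hB0u, hB1u,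
    hfr _ (by positivity), hfr _ (by positivity), hfr _ (by positivity),
    hfr _ (by nlinarith)] at hwlt
  rw [← EReal.coe_add, ← EReal.coe_add, ← EReal.coe_add, ← EReal.coe_add,
    EReal.coe_lt_coe_iff] at hwlt
  linarith
lemma delta_ge (fr : ℝ → ℝ)
    (hstep : ∀ k : ℕ, 1 ≤ k → ∀ a b : ℝ, 0 < a → 0 < b → a ≠ b →
      fr (((k:ℝ)+2)*a) - fr (((k:ℝ)+1)*a) < fr (((k:ℝ)+1)*b) - fr ((k:ℝ)*b))
    (hcont : ∀ x : ℝ, 0 < x → ContinuousAt fr x)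
    (k : ℕ) (hk : 1 ≤ k) (x y : ℝ) (hx : 0 < x) (hy : 0 < y) (hxy : x ≠ y) :
    fr (((k:ℝ)+1)*y) - fr ((k:ℝ)*y) ≤ fr (((k:ℝ)+1)*x) - fr ((k:ℝ)*x) := by
  have key : ∀ t : ℕ, 1 ≤ t →
      fr (((k:ℝ)+1)*y + y/t) - fr ((k:ℝ)*y + y/t)
        ≤ fr (((k:ℝ)+1)*x) - fr ((k:ℝ)*x) := by
    intro t ht
    have ht' : (0:ℝ) < (t:ℝ) := by exact_mod_cast ht
    set F : ℕ → ℝ := fun j => fr (((k*t+j : ℕ):ℝ) * (x/t)) with hF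
    set G : ℕ → ℝ := fun j => fr (((k*t+j : ℕ):ℝ) * (y/t)) with hG
    have hFsum : ∑ j ∈ Finset.range t, (F (j+1) - F j) = F t - F 0 :=
      Finset.sum_range_sub F t
    have hGsum : ∑ j ∈ Finset.range t, (G (j+1+1) - G (j+1)) = G (t+1) - G 1 :=
      Finset.sum_range_sub (fun j => G (j+1)) t
    have hterm : ∀ j ∈ Finset.range t, G (j+1+1) - G (j+1) ≤ F (j+1) - F j := by
      intro j _
      have hge1 : 1 ≤ k*t+j := by
        have := Nat.mul_le_mul hk ht
        omega
      have hne : y/(t:ℝ) ≠ x/(t:ℝ) := by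
        intro hc
        exact hxy (by field_simp at hc; linarith)
      have h := hstep (k*t+j) hge1 (y/t) (x/t) (by positivity) (by positivity) hne
      have e1 : ((k*t+j:ℕ):ℝ) + 2 = ((k*t+(j+1+1):ℕ):ℝ) := by push_cast; ring
      have e2 : ((k*t+j:ℕ):ℝ) + 1 = ((k*t+(j+1):ℕ):ℝ) := by push_cast; ring
      rw [e1, e2] at h
      simp only [hF, hG]
      exact h.le
    have hsum := Finset.sum_le_sum hterm
    rw [hFsum, hGsum] at hsum
    have eFt : ((k*t+t:ℕ):ℝ) * (x/t) = ((k:ℝ)+1)*x := by push_cast; field_simp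
    have eF0 : ((k*t+0:ℕ):ℝ) * (x/t) = (k:ℝ)*x := by push_cast; field_simp; ring
    have eGt : ((k*t+(t+1):ℕ):ℝ) * (y/t) = ((k:ℝ)+1)*y + y/t := by
      push_cast; field_simp; ring
    have eG1 : ((k*t+1:ℕ):ℝ) * (y/t) = (k:ℝ)*y + y/t := by push_cast; field_simp
    simp only [hF, hG, eFt, eF0, eGt, eG1] at hsum
    exact hsum
  have h1 : Filter.Tendsto (fun t : ℕ => ((k:ℝ)+1)*y + y/t) Filter.atTop
      (nhds (((k:ℝ)+1)*y)) := by
    simpa using tendsto_const_nhds.add (tendsto_const_div_atTop_nhds_zero_nat y)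
  have h2 : Filter.Tendsto (fun t : ℕ => (k:ℝ)*y + y/t) Filter.atTop
      (nhds ((k:ℝ)*y)) := by
    simpa using tendsto_const_nhds.add (tendsto_const_div_atTop_nhds_zero_nat y)
  have hk' : (0:ℝ) < (k:ℝ) := by exact_mod_cast hk
  have hc1 := ((hcont (((k:ℝ)+1)*y) (by positivity)).tendsto).comp h1
  have hc2 := ((hcont ((k:ℝ)*y) (by positivity)).tendsto).comp h2
  exact le_of_tendsto (hc1.sub hc2) (Filter.eventually_atTop.2 ⟨1, key⟩)

lemma delta_const (fr : ℝ → ℝ)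
    (hstep : ∀ k : ℕ, 1 ≤ k → ∀ a b : ℝ, 0 < a → 0 < b → a ≠ b →
      fr (((k:ℝ)+2)*a) - fr (((k:ℝ)+1)*a) < fr (((k:ℝ)+1)*b) - fr ((k:ℝ)*b))
    (hcont : ∀ x : ℝ, 0 < x → ContinuousAt fr x)
    (k : ℕ) (hk : 1 ≤ k) (x y : ℝ) (hx : 0 < x) (hy : 0 < y) :
    fr (((k:ℝ)+1)*x) - fr ((k:ℝ)*x) = fr (((k:ℝ)+1)*y) - fr ((k:ℝ)*y) := by
  rcases eq_or_ne x y with h | h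
  · rw [h]
  · exact le_antisymm (delta_ge fr hstep hcont k hk y x hy hx h.symm)
      (delta_ge fr hstep hcont k hk x y hx hy h)
lemma log_form (fr : ℝ → ℝ)
    (hmono : ∀ x y : ℝ, 0 < x → x < y → fr x < fr y)
    (hcont : ∀ x : ℝ, 0 < x → ContinuousAt fr x)
    (hstep : ∀ k : ℕ, 1 ≤ k → ∀ a b : ℝ, 0 < a → 0 < b → a ≠ b →
      fr (((k:ℝ)+2)*a) - fr (((k:ℝ)+1)*a) < fr (((k:ℝ)+1)*b) - fr ((k:ℝ)*b)) :
    ∃ α β : ℝ, 0 < α ∧ ∀ x : ℝ, 0 < x → fr x = α * Real.log x + β := by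
  have hmono' : ∀ x y : ℝ, 0 < x → x ≤ y → fr x ≤ fr y := by
    intro x y hx hxy
    rcases eq_or_lt_of_le hxy with h | h
    · rw [h]
    · exact (hmono x y hx h).le
  have hdc := delta_const fr hstep hcont
  set c : ℕ → ℝ := fun k => fr ((k:ℝ)+1) - fr (k:ℝ) with hc
  have hck : ∀ k : ℕ, 1 ≤ k → ∀ x : ℝ, 0 < x →
      fr (((k:ℝ)+1)*x) - fr ((k:ℝ)*x) = c k := by
    intro k hk x hx
    have := hdc k hk x 1 hx one_pos
    simpa [hc] using this
  have hcpos : ∀ k : ℕ, 1 ≤ k → 0 < c k := by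
    intro k hk
    have hk' : (0:ℝ) < (k:ℝ) := by exact_mod_cast hk
    exact sub_pos.2 (hmono _ _ hk' (by linarith))
  have hCN : ∀ N : ℕ, 1 ≤ N → ∀ x : ℝ, 0 < x →
      fr ((N:ℝ)*x) = fr x + (fr (N:ℝ) - fr 1) := by
    intro N hN
    induction N, hN using Nat.le_induction with
    | base => intro x hx; norm_num
    | succ N hN ih =>
      intro x hx
      have h1 := hck N hN x hx
      have h2 : c N = fr ((N:ℝ)+1) - fr (N:ℝ) := rfl
      have h3 := ih x hx
      push_cast
      linarith
  have hrat : ∀ p q : ℕ, 1 ≤ p → 1 ≤ q → ∀ x : ℝ, 0 < x →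
      fr ((p:ℝ)/(q:ℝ)*x) = fr x + (fr (p:ℝ) - fr 1) - (fr (q:ℝ) - fr 1) := by
    intro p q hp hq x hx
    have hq' : (0:ℝ) < (q:ℝ) := by exact_mod_cast hq
    have h1 := hCN p hp (x/(q:ℝ)) (by positivity)
    have h2 := hCN q hq (x/(q:ℝ)) (by positivity)
    have e1 : (p:ℝ)*(x/(q:ℝ)) = (p:ℝ)/(q:ℝ)*x := by ring
    have e2 : (q:ℝ)*(x/(q:ℝ)) = x := by field_simp
    rw [e1] at h1
    rw [e2] at h2
    linarith
  have hanti : ∀ j l : ℕ, 1 ≤ j → j ≤ l → c l ≤ c j := by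
    intro j l hj hjl
    induction l, hjl using Nat.le_induction with
    | base => exact le_refl _
    | succ l hl ih =>
      have hl1 : 1 ≤ l := le_trans hj hl
      have h := hstep l hl1 2 1 two_pos one_pos (by norm_num)
      have h2 := hdc (l+1) (by omega) 2 1 two_pos one_pos
      have e1 : c (l+1) = fr (((l+1:ℕ):ℝ)+1) - fr ((l+1:ℕ):ℝ) := rfl
      have e2 : c l = fr ((l:ℝ)+1) - fr (l:ℝ) := rfl
      refine le_trans ?_ ih
      rw [e1, e2]
      push_cast
      push_cast at h2
      ring_nf at h h2 ⊢
      linarith [h, h2]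
  -- c tends to zero
  have hsmall : ∀ ε : ℝ, 0 < ε → ∃ M : ℕ, 1 ≤ M ∧ ∀ j : ℕ, M ≤ j → c j < ε := by
    intro ε hε
    set K : ℝ := fr 2 - fr 1 with hK
    have hKpos : 0 < K := sub_pos.2 (hmono 1 2 one_pos one_lt_two)
    obtain ⟨k, hk⟩ : ∃ k : ℕ, 1 ≤ k ∧ K/ε < (k:ℝ) := by
      obtain ⟨k, hk⟩ := exists_nat_gt (max 1 (K/ε))
      exact ⟨k, by
        constructor
        · have := le_max_left 1 (K/ε)
          have : (1:ℝ) < (k:ℝ) := lt_of_le_of_lt this hk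
          exact_mod_cast this.le
        · exact lt_of_le_of_lt (le_max_right _ _) hk⟩
    obtain ⟨hk1, hk2⟩ := hk
    have hksum : ∑ j ∈ Finset.range k, c (k + j) = fr ((2*k:ℕ):ℝ) - fr (k:ℝ) := by
      have := Finset.sum_range_sub (fun j => fr ((k+j:ℕ):ℝ)) k
      have e : ∀ j : ℕ, c (k+j) = fr ((k+(j+1):ℕ):ℝ) - fr ((k+j:ℕ):ℝ) := by
        intro j
        show fr (((k+j:ℕ):ℝ)+1) - fr ((k+j:ℕ):ℝ) = _
        push_cast
        try ring_nf
      rw [Finset.sum_congr rfl (fun j _ => e j), this]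
      simp [two_mul]
    have hKval : fr ((2*k:ℕ):ℝ) - fr (k:ℝ) = K := by
      have := hCN 2 (by norm_num) ((k:ℝ)) (by exact_mod_cast hk1)
      push_cast
      push_cast at this
      linarith
    have hterm : ∀ j ∈ Finset.range k, c (2*k) ≤ c (k+j) := by
      intro j hj
      exact hanti (k+j) (2*k) (by omega) (by
        have := Finset.mem_range.1 hj
        omega)
    have hsum_ge : (k:ℝ) * c (2*k) ≤ K := by
      have h1 : ∑ j ∈ Finset.range k, c (2*k) ≤ ∑ j ∈ Finset.range k, c (k+j) :=
        Finset.sum_le_sum hterm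
      rw [Finset.sum_const, Finset.card_range, nsmul_eq_mul] at h1
      rw [hksum, hKval] at h1
      exact h1
    have hc2k : c (2*k) < ε := by
      have hk' : (0:ℝ) < (k:ℝ) := by exact_mod_cast hk1
      have : K < ε * (k:ℝ) := by
        rw [div_lt_iff₀ hε] at hk2
        linarith [hk2]
      nlinarith [hsum_ge]
    exact ⟨2*k, by omega, fun j hj => lt_of_le_of_lt (hanti (2*k) j (by omega) hj) hc2k⟩
  -- the multiplicative relation
  have hmul : ∀ x y : ℝ, 0 < x → 0 < y → fr (x*y) = fr x + fr y - fr 1 := by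
    intro x y hx hy
    set D : ℝ := fr (x*y) - (fr x + fr y - fr 1) with hD
    have habs : ∀ ε : ℝ, 0 < ε → |D| ≤ ε := by
      intro ε hε
      obtain ⟨M, hM1, hM⟩ := hsmall ε hε
      obtain ⟨q, hq1, hqge⟩ : ∃ q : ℕ, 1 ≤ q ∧ ((M:ℝ)+1)/y ≤ (q:ℝ) := by
        obtain ⟨q, hq⟩ := exists_nat_gt (max 1 (((M:ℝ)+1)/y))
        refine ⟨q, ?_, le_of_lt (lt_of_le_of_lt (le_max_right _ _) hq)⟩
        have : (1:ℝ) < (q:ℝ) := lt_of_le_of_lt (le_max_left _ _) hq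
        exact_mod_cast this.le
      have hq' : (0:ℝ) < (q:ℝ) := by exact_mod_cast hq1
      set p : ℕ := ⌊y * (q:ℝ)⌋₊ with hp
      have hyq : (0:ℝ) ≤ y * q := by positivity
      have hpM : M ≤ p := by
        apply Nat.le_floor
        have : ((M:ℝ)+1) ≤ y * q := by
          rw [div_le_iff₀ hy] at hqge
          linarith [hqge]
        linarith
      have hp1 : 1 ≤ p := le_trans hM1 hpM
      have hple : (p:ℝ) ≤ y * q := Nat.floor_le hyq
      have hplt : y * q < (p:ℝ) + 1 := Nat.lt_floor_add_one _
      have hp' : (0:ℝ) < (p:ℝ) := by exact_mod_cast hp1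
      -- sandwich bounds
      have hlb : (p:ℝ)/(q:ℝ) ≤ y := by rw [div_le_iff₀ hq']; linarith
      have hub : y ≤ ((p:ℝ)+1)/(q:ℝ) := by rw [le_div_iff₀ hq']; nlinarith
      have hfr1 := hrat p q hp1 hq1 x hx
      have hfr2 := hrat (p+1) q (by omega) hq1 x hx
      have hfr3 := hrat p q hp1 hq1 1 one_pos
      have hfr4 := hrat (p+1) q (by omega) hq1 1 one_pos
      have hxy1 : fr ((p:ℝ)/(q:ℝ)*x) ≤ fr (x*y) := by
        apply hmono' _ _ (by positivity)
        rw [mul_comm x y]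
        exact mul_le_mul_of_nonneg_right hlb hx.le
      have hxy2 : fr (x*y) ≤ fr (((p:ℝ)+1)/(q:ℝ)*x) := by
        apply hmono' _ _ (by positivity)
        rw [mul_comm x y]
        exact mul_le_mul_of_nonneg_right hub hx.le
      have hy1 : fr ((p:ℝ)/(q:ℝ)*1) ≤ fr y := by
        apply hmono' _ _ (by positivity)
        rw [mul_one]
        exact hlb
      have hy2 : fr y ≤ fr (((p:ℝ)+1)/(q:ℝ)*1) := by
        apply hmono' _ _ hy
        rw [mul_one]
        exact hub
      have hcp : c p < ε := hM p hpM
      have hcpdef : c p = fr ((p:ℝ)+1) - fr (p:ℝ) := rfl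
      have hcast : ((p+1:ℕ):ℝ) = (p:ℝ)+1 := by push_cast; ring
      rw [hcast] at hfr2 hfr4
      rw [abs_le]
      constructor <;> [skip; skip] <;> simp only [hD] <;> nlinarith
    rcases eq_or_ne D 0 with h | h
    · rw [hD] at h; linarith [h]
    · exfalso
      have h1 := habs (|D|/2) (by positivity)
      have h2 : 0 < |D| := abs_pos.2 h
      linarith
  -- additive function on logs
  set G : ℝ → ℝ := fun t => fr (Real.exp t) - fr 1 with hG
  have hGadd : ∀ s t : ℝ, G (s+t) = G s + G t := by
    intro s t
    have := hmul (Real.exp s) (Real.exp t) (Real.exp_pos s) (Real.exp_pos t)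
    simp only [hG, ← Real.exp_add] at *
    linarith
  have hGmono : ∀ s t : ℝ, s < t → G s < G t := by
    intro s t hst
    exact sub_lt_sub_right (hmono _ _ (Real.exp_pos s) (Real.exp_lt_exp.2 hst)) _
  set φ : ℝ →+ ℝ := AddMonoidHom.mk' G hGadd with hφ
  have hGrat : ∀ r : ℚ, G (r:ℝ) = (r:ℝ) * G 1 := by
    intro r
    have := map_ratCast_smul φ ℝ ℝ r (1:ℝ)
    simp only [smul_eq_mul, mul_one] at this
    exact this
  have hG0 : G 0 = 0 := map_zero φ
  have hG1 : 0 < G 1 := by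
    have := hGmono 0 1 one_pos
    linarith
  have hGlin : ∀ t : ℝ, G t = G 1 * t := by
    intro t
    rcases lt_trichotomy (G t) (G 1 * t) with h | h | h
    · exfalso
      have hdiv : G t / G 1 < t := by rw [div_lt_iff₀ hG1]; linarith
      obtain ⟨r, hr1, hr2⟩ := exists_rat_btwn hdiv
      have h1 : G (r:ℝ) < G t := hGmono _ _ hr2
      rw [hGrat] at h1
      have : G t / G 1 * G 1 < (r:ℝ) * G 1 := by
        exact mul_lt_mul_of_pos_right hr1 hG1
      rw [div_mul_cancel₀ _ hG1.ne'] at this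
      linarith
    · exact h
    · exfalso
      have hdiv : t < G t / G 1 := by rw [lt_div_iff₀ hG1]; linarith
      obtain ⟨r, hr1, hr2⟩ := exists_rat_btwn hdiv
      have h1 : G t < G (r:ℝ) := hGmono _ _ hr1
      rw [hGrat] at h1
      have : (r:ℝ) * G 1 < G t / G 1 * G 1 :=
        mul_lt_mul_of_pos_right hr2 hG1
      rw [div_mul_cancel₀ _ hG1.ne'] at this
      linarith
  refine ⟨G 1, fr 1, hG1, fun x hx => ?_⟩
  have h1 : G (Real.log x) = fr x - fr 1 := by
    simp only [hG, Real.exp_log hx]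
  have h2 := hGlin (Real.log x)
  rw [h1] at h2
  linarith
theorem real_twovalue (n : ℕ) (hn : 2 ≤ n) (f : ℝ → EReal)
    (hfmono : StrictMonoOn f (Set.Ici (0 : ℝ)))
    (hftop : ∀ x : ℝ, 0 ≤ x → f x ≠ ⊤)
    (hfcont : ContinuousOn f (Set.Ioi (0 : ℝ))) :
    (∀ m : ℕ, ∀ u : Fin n → Fin m → ℝ, (∀ i g, 0 ≤ u i g) →
        TwoValue u → PositiveAdmitting u →
        ∀ A : Fin m → Fin n, Chosen f u A → EF1 u A)
    ↔ (∃ α β : ℝ, 0 < α ∧ f 0 = ⊥ ∧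
        ∀ x : ℝ, 0 < x → f x = ((α * Real.log x + β : ℝ) : EReal)) := by
  constructor
  · intro hprop
    set fr : ℝ → ℝ := fun x => (f x).toReal with hfrdef
    have hnebot : ∀ x : ℝ, 0 < x → f x ≠ ⊥ := by
      intro x hx hbot
      have h2 : f (x/2) < f x :=
        hfmono (Set.mem_Ici.2 (by linarith)) (Set.mem_Ici.2 hx.le) (by linarith)
      rw [hbot] at h2
      exact not_lt_bot h2
    have hfr : ∀ x : ℝ, 0 < x → f x = ((fr x : ℝ) : EReal) := by
      intro x hx
      exact (EReal.coe_toReal (hftop x hx.le) (hnebot x hx)).symm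
    have hmono : ∀ x y : ℝ, 0 < x → x < y → fr x < fr y := by
      intro x y hx hxy
      have h := hfmono (Set.mem_Ici.2 hx.le)
        (Set.mem_Ici.2 (by linarith : (0:ℝ) ≤ y)) hxy
      rw [hfr x hx, hfr y (by linarith)] at h
      exact_mod_cast h
    have hcont : ∀ x : ℝ, 0 < x → ContinuousAt fr x := by
      intro x hx
      have hA : ContinuousAt f x := hfcont.continuousAt (isOpen_Ioi.mem_nhds hx)
      exact (EReal.tendsto_toReal (hftop x hx.le) (hnebot x hx)).comp hA
    have hstep : ∀ k : ℕ, 1 ≤ k → ∀ a b : ℝ, 0 < a → 0 < b → a ≠ b →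
        fr (((k:ℝ)+2)*a) - fr (((k:ℝ)+1)*a) < fr (((k:ℝ)+1)*b) - fr ((k:ℝ)*b) :=
      fun k hk a b ha hb hab => step_lemma hn f hprop fr hfr k hk a b ha hb hab
    obtain ⟨α, β, hα, hform⟩ := log_form fr hmono hcont hstep
    refine ⟨α, β, hα, ?_, ?_⟩
    · by_contra hne
      have h0 : f 0 = (((f 0).toReal : ℝ) : EReal) :=
        (EReal.coe_toReal (hftop 0 le_rfl) hne).symm
      set r : ℝ := (f 0).toReal with hr
      set x : ℝ := Real.exp ((r - β - 1)/α) with hx'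
      have hx : 0 < x := Real.exp_pos _
      have hfrx : fr x = r - 1 := by
        rw [hform x hx, hx', Real.log_exp]
        field_simp
        ring
      have hlt := hfmono (Set.mem_Ici.2 le_rfl) (Set.mem_Ici.2 hx.le) hx
      rw [h0, hfr x hx, EReal.coe_lt_coe_iff, hfrx] at hlt
      linarith
    · intro x hx
      rw [hfr x hx]
      exact congrArg _ (hform x hx)
  · rintro ⟨α, β, hα, hf0, hform⟩ m u hu htv hpa A hA
    exact chosen_EF1_of_log f α β hα hf0 hform u hu hpa A hA

end FairDiv
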